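/- Every consistent normal modal logic L is either contained in K + {□p ↔ p} or contained in K + {□p} (Makinson's theorem). Consequently, for any formula χ in L, either the 'forgetful' translation χ^f (erasing all boxes) or the 'collapse' translation χ^c (replacing every □φ by ⊤) is a classical tautology uniformly for all χ ∈ L. -/

import Mathlib

/-! ## Basic machinery: strings, polynomial time, NP, circuits, formulas -/

/-- The trivial finite encoding of binary strings over the alphabet `Bool`. -/
def listBoolEncoding : Computability.Encoding (List Bool) Bool where
  encode := id
  decode := fun l => some l
  decode_encode := fun _ => rfl

/-- A function on binary strings is polynomial-time computable if some
two-stack Turing machine computes it in polynomial time. -/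
def PolyTimeComputable (f : List Bool → List Bool) : Prop :=
  Nonempty (Turing.TM2ComputableInPolyTime listBoolEncoding.encode listBoolEncoding.encode f)

/-- An injective pairing of binary strings. -/
def pairEnc (u w : List Bool) : List Bool :=
  (u.map fun b => [true, b]).flatten ++ false :: w

/-- A predicate on binary strings is polynomial-time decidable. -/
def PolyTimeDecidable (P : List Bool → Prop) : Prop :=
  ∃ f, PolyTimeComputable f ∧ ∀ w, P w ↔ f w = [true]

/-- A binary predicate on binary strings is polynomial-time decidable. -/
def PolyTimeDecidable2 (P : List Bool → List Bool → Prop) : Prop :=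
  ∃ f, PolyTimeComputable f ∧ ∀ u w, P u w ↔ f (pairEnc u w) = [true]

/-- `L ∈ NP`: there are a polynomial-time decidable binary predicate `R` and a
polynomial `p` with `w ∈ L` iff some witness `u` with `|u| ≤ p (|w|)` satisfies `R u w`. -/
def InNP (L : Set (List Bool)) : Prop :=
  ∃ (R : List Bool → List Bool → Prop) (p : Polynomial ℕ),
    PolyTimeDecidable2 R ∧ ∀ w, w ∈ L ↔ ∃ u, u.length ≤ p.eval w.length ∧ R u w

/-- `L ∈ P`. -/
def InP (L : Set (List Bool)) : Prop := PolyTimeDecidable (· ∈ L)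

/-- A gate of a Boolean circuit with `s` gates: a constant, an input gate reading
input variable `a : ℕ`, or a negation/conjunction/disjunction of earlier gates. -/
inductive CGate (s : ℕ) : Type where
  | const : Bool → CGate s
  | input : ℕ → CGate s
  | not : Fin s → CGate s
  | and : Fin s → Fin s → CGate s
  | or : Fin s → Fin s → CGate s

/-- The gates referenced by a gate. -/
def CGate.deps {s : ℕ} : CGate s → List (Fin s)
  | .const _ => []
  | .input _ => []
  | .not j => [j]
  | .and j k => [j, k]
  | .or j k => [j, k]

/-- A Boolean circuit (as a DAG of gates, without a chosen output). -/
structure CircuitBase where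
  size : ℕ
  gates : Fin size → CGate size
  wf : ∀ i : Fin size, ∀ j ∈ (gates i).deps, (j : ℕ) < (i : ℕ)

/-- Evaluate gate `i` of a circuit under an assignment `v` to the input variables. -/
def CircuitBase.evalGate (c : CircuitBase) (v : ℕ → Bool) (i : Fin c.size) : Bool :=
  match h : c.gates i with
  | .const b => b
  | .input a => v a
  | .not j => !(c.evalGate v j)
  | .and j k => c.evalGate v j && c.evalGate v k
  | .or j k => c.evalGate v j || c.evalGate v k
termination_by (i : ℕ)
decreasing_by
  · exact c.wf i j (by rw [h]; simp [CGate.deps])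
  · exact c.wf i j (by rw [h]; simp [CGate.deps])
  · exact c.wf i k (by rw [h]; simp [CGate.deps])
  · exact c.wf i j (by rw [h]; simp [CGate.deps])
  · exact c.wf i k (by rw [h]; simp [CGate.deps])

/-- The circuit reads only input variables from `S`. -/
def CircuitBase.InputsIn (c : CircuitBase) (S : Set ℕ) : Prop :=
  ∀ (i : Fin c.size) (a : ℕ), c.gates i = CGate.input a → a ∈ S

/-- A monotone circuit: no negation gates. -/
def CircuitBase.MonotoneC (c : CircuitBase) : Prop :=
  ∀ (i j : Fin c.size), c.gates i ≠ CGate.not j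

/-- A single-output Boolean circuit. -/
structure Circuit extends CircuitBase where
  out : Fin size

/-- Evaluate a circuit on an assignment to the input variables. -/
def Circuit.eval (c : Circuit) (v : ℕ → Bool) : Bool :=
  c.toCircuitBase.evalGate v c.out

/-- A multi-output Boolean circuit. -/
structure MultiCircuit extends CircuitBase where
  outs : List (Fin size)

/-- Evaluate a multi-output circuit on an assignment to the input variables. -/
def MultiCircuit.eval (c : MultiCircuit) (v : ℕ → Bool) : List Bool :=
  c.outs.map (c.toCircuitBase.evalGate v)

/-- `pad_m(w) = 1w₁1w₂…1w_l 0…0` of total length `2m`. -/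
def padBits (m : ℕ) (w : List Bool) : List Bool :=
  (w.map fun b => [true, b]).flatten ++ List.replicate (2 * m - 2 * w.length) false

/-- A function on binary strings is computable by polynomial-size circuits:
a family `Cₙ` of multi-output circuits of size polynomial in `n`, where
`Cₙ` reads input bits `0,…,n-1` and outputs the padded value of `f` on
every input of length `n`. -/
def PolySizeComputable (f : List Bool → List Bool) : Prop :=
  ∃ (C : ℕ → MultiCircuit) (outLen : ℕ → ℕ) (p : Polynomial ℕ),
    ∀ n, (C n).size ≤ p.eval n ∧ (C n).toCircuitBase.InputsIn {a | a < n} ∧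
      ∀ w : List Bool, w.length = n →
        (f w).length ≤ outLen n ∧
        (C n).eval (fun a => w.getD a false) = padBits (outLen n) (f w)

/-- `L ∈ P/poly`: a polynomial-size circuit family decides membership in `L`. -/
def InPPoly (L : Set (List Bool)) : Prop :=
  ∃ (C : ℕ → Circuit) (p : Polynomial ℕ),
    ∀ n, (C n).size ≤ p.eval n ∧ (C n).toCircuitBase.InputsIn {a | a < n} ∧
      ∀ w : List Bool, w.length = n →
        (w ∈ L ↔ (C n).eval (fun a => w.getD a false) = true)

/-- A proof system for a language `L`: a polynomial-time decidable binary relation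
`Pr` such that `w ∈ L` iff `w` has a `Pr`-proof. -/
def IsProofSystem (Pr : List Bool → List Bool → Prop) (L : Set (List Bool)) : Prop :=
  PolyTimeDecidable2 Pr ∧ ∀ w, w ∈ L ↔ ∃ u, Pr u w

/-- A proof system is polynomially bounded if every member of `L` has a proof of
size polynomial in its length. -/
def PolyBounded (Pr : List Bool → List Bool → Prop) (L : Set (List Bool)) : Prop :=
  ∃ p : Polynomial ℕ, ∀ w ∈ L, ∃ u, Pr u w ∧ u.length ≤ p.eval w.length

/-- One-way protocols. -/
structure OneWayProtocol where
  /-- the polynomial-time decidable predicate of source data -/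
  Pred : List Bool → Prop
  /-- the public transformation -/
  h : List Bool → List Bool
  /-- the derived secret information -/
  k : List Bool → List Bool
  /-- computes (in unary) the length of `k u` from `h u` -/
  lenFun : List Bool → List Bool
  /-- the bounding polynomial -/
  bnd : Polynomial ℕ
  pred_dec : PolyTimeDecidable Pred
  h_poly : PolyTimeComputable h
  k_poly : PolyTimeComputable k
  lenFun_poly : PolyTimeComputable lenFun
  /-- semi-injectivity -/
  semi_inj : ∀ u₁ u₂, Pred u₁ → Pred u₂ → h u₁ = h u₂ → k u₁ = k u₂
  /-- `|k u|` is polynomial-time computable from `h u` -/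
  len_eq : ∀ u, (k u).length = (lenFun (h u)).length
  /-- boundedness: `|u| ≤ bnd (|h u|)` -/
  bounded : ∀ u, u.length ≤ bnd.eval (h u).length
  /-- security against `P/poly` adversaries -/
  secure : ¬ ∃ f : List Bool → List Bool, PolySizeComputable f ∧ ∀ u, k u = f (h u)

/-! ## Propositional formulas -/

/-- Propositional formulas over `{⊤, ⊥, ∧, ∨, →}` with variables indexed by `ℕ`. -/
inductive PropForm : Type where
  | tr : PropForm
  | fls : PropForm
  | var : ℕ → PropForm
  | and : PropForm → PropForm → PropForm
  | or : PropForm → PropForm → PropForm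
  | imp : PropForm → PropForm → PropForm
deriving DecidableEq

/-- Negation abbreviates `φ → ⊥`. -/
def PropForm.neg (φ : PropForm) : PropForm := φ.imp .fls

/-- Classical Boolean evaluation of a formula. -/
def PropForm.eval (v : ℕ → Bool) : PropForm → Bool
  | .tr => true
  | .fls => false
  | .var a => v a
  | .and φ ψ => φ.eval v && ψ.eval v
  | .or φ ψ => φ.eval v || ψ.eval v
  | .imp φ ψ => !(φ.eval v) || ψ.eval v

/-- A classical tautology. -/
def PropForm.Taut (φ : PropForm) : Prop := ∀ v, φ.eval v = true

/-- The variables occurring in a formula. -/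
def PropForm.vars : PropForm → Finset ℕ
  | .tr => ∅
  | .fls => ∅
  | .var a => {a}
  | .and φ ψ => φ.vars ∪ ψ.vars
  | .or φ ψ => φ.vars ∪ ψ.vars
  | .imp φ ψ => φ.vars ∪ ψ.vars

/-- The size of a formula. -/
def PropForm.size : PropForm → ℕ
  | .tr => 1
  | .fls => 1
  | .var _ => 1
  | .and φ ψ => φ.size + ψ.size + 1
  | .or φ ψ => φ.size + ψ.size + 1
  | .imp φ ψ => φ.size + ψ.size + 1

/-- Substitution of formulas for variables. -/
def PropForm.subst (σ : ℕ → PropForm) : PropForm → PropForm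
  | .tr => .tr
  | .fls => .fls
  | .var a => σ a
  | .and φ ψ => .and (φ.subst σ) (ψ.subst σ)
  | .or φ ψ => .or (φ.subst σ) (ψ.subst σ)
  | .imp φ ψ => .imp (φ.subst σ) (ψ.subst σ)

/-- A monotone formula: built from atoms, `⊤`, `⊥`, `∧`, `∨` only (no implication). -/
def PropForm.IsMonotone : PropForm → Prop
  | .tr => True
  | .fls => True
  | .var _ => True
  | .and φ ψ => φ.IsMonotone ∧ ψ.IsMonotone
  | .or φ ψ => φ.IsMonotone ∧ ψ.IsMonotone
  | .imp _ _ => False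

/-- `MonoIn P b φ` holds if every occurrence in `φ` of a variable from `P` has
polarity allowed by `b` (`b = true`: positive occurrences only are constrained;
a variable of `P` may occur with polarity `b` but not opposite).
`MonoIn P true φ` says `φ` is monotone in the variables of `P`
(no negated occurrence of a `P`-variable in negation normal form). -/
def MonoIn (P : Finset ℕ) : Bool → PropForm → Prop
  | _, .tr => True
  | _, .fls => True
  | b, .var a => b = true ∨ a ∉ P
  | b, .and φ ψ => MonoIn P b φ ∧ MonoIn P b ψ
  | b, .or φ ψ => MonoIn P b φ ∧ MonoIn P b ψ
  | b, .imp φ ψ => MonoIn P (!b) φ ∧ MonoIn P b ψ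

/-- Conjunction of a list of formulas. -/
def conjList (Γ : List PropForm) : PropForm := Γ.foldr PropForm.and .tr

/-- Disjunction of a list of formulas. -/
def disjList (Δ : List PropForm) : PropForm := Δ.foldr PropForm.or .fls

/-- `⋀_{i<m} (pᵢ ∨ ¬pᵢ)`. -/
def excludedMiddleConj (m : ℕ) : PropForm :=
  conjList ((List.range m).map fun i => (PropForm.var i).or (PropForm.var i).neg)

/-- Hilbert-style provability in intuitionistic propositional logic `IPC`. -/
inductive IPC : PropForm → Prop
  | mp {φ ψ : PropForm} : IPC (φ.imp ψ) → IPC φ → IPC ψ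
  | ax1 (φ ψ : PropForm) : IPC (φ.imp (ψ.imp φ))
  | ax2 (φ ψ χ : PropForm) : IPC ((φ.imp (ψ.imp χ)).imp ((φ.imp ψ).imp (φ.imp χ)))
  | axAndI (φ ψ : PropForm) : IPC (φ.imp (ψ.imp (φ.and ψ)))
  | axAndL (φ ψ : PropForm) : IPC ((φ.and ψ).imp φ)
  | axAndR (φ ψ : PropForm) : IPC ((φ.and ψ).imp ψ)
  | axOrL (φ ψ : PropForm) : IPC (φ.imp (φ.or ψ))
  | axOrR (φ ψ : PropForm) : IPC (ψ.imp (φ.or ψ))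
  | axOrE (φ ψ χ : PropForm) : IPC ((φ.imp χ).imp ((ψ.imp χ).imp ((φ.or ψ).imp χ)))
  | axFls (φ : PropForm) : IPC (PropForm.fls.imp φ)
  | axTr : IPC .tr

/-- Unary encoding of a natural number as a binary string. -/
def natBits (n : ℕ) : List Bool := List.replicate n true ++ [false]

/-- An encoding of propositional formulas as binary strings. -/
def PropForm.encode : PropForm → List Bool
  | .tr => [false, false, false]
  | .fls => [false, false, true]
  | .var a => [false, true] ++ natBits a
  | .and φ ψ => [true, false, false] ++ φ.encode ++ ψ.encode
  | .or φ ψ => [true, false, true] ++ φ.encode ++ ψ.encode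
  | .imp φ ψ => [true, true] ++ φ.encode ++ ψ.encode

/-- The language of (codes of) classical propositional tautologies. -/
def CPClang : Set (List Bool) := {w | ∃ φ : PropForm, φ.Taut ∧ w = φ.encode}

/-- The formula computed by a circuit (unfolding the DAG into a tree). -/
def CircuitBase.gateForm (c : CircuitBase) (i : Fin c.size) : PropForm :=
  match h : c.gates i with
  | .const b => if b then .tr else .fls
  | .input a => .var a
  | .not j => (c.gateForm j).neg
  | .and j k => (c.gateForm j).and (c.gateForm k)
  | .or j k => (c.gateForm j).or (c.gateForm k)
termination_by (i : ℕ)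
decreasing_by
  · exact c.wf i j (by rw [h]; simp [CGate.deps])
  · exact c.wf i j (by rw [h]; simp [CGate.deps])
  · exact c.wf i k (by rw [h]; simp [CGate.deps])
  · exact c.wf i j (by rw [h]; simp [CGate.deps])
  · exact c.wf i k (by rw [h]; simp [CGate.deps])

/-- The formula `[C]` of a single-output circuit `C`. -/
def Circuit.toForm (c : Circuit) : PropForm := c.toCircuitBase.gateForm c.out

/-- `[C]` is a Craig interpolant for `φ → ψ`: `C` reads only the shared
variables, and for every assignment `v`, `φ(v) = 1` implies `C(v) = 1`, and
`C(v) = 1` implies `ψ(v) = 1`. -/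
def Interpolates (C : Circuit) (φ ψ : PropForm) : Prop :=
  C.toCircuitBase.InputsIn {a | a ∈ φ.vars ∩ ψ.vars} ∧
  ∀ v : ℕ → Bool, (φ.eval v = true → C.eval v = true) ∧ (C.eval v = true → ψ.eval v = true)

/-- Feasible interpolation of a proof system for `CPC`: from any proof of an
implication one obtains an interpolating circuit of polynomial size. -/
def FeasibleInterpolation (Pr : List Bool → List Bool → Prop) : Prop :=
  ∃ s : Polynomial ℕ, ∀ (φ ψ : PropForm) (u : List Bool),
    Pr u (φ.imp ψ).encode →
    ∃ C : Circuit,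
      C.size ≤ s.eval (u.length + (φ.imp ψ).encode.length) ∧ Interpolates C φ ψ

/-! ## Horn formulas -/

/-- A conjunction of atoms. -/
inductive AtomConj : PropForm → Prop
  | var (a : ℕ) : AtomConj (.var a)
  | and {φ ψ : PropForm} : AtomConj φ → AtomConj ψ → AtomConj (φ.and ψ)

/-- An implicational Horn formula: an atom, or `(p₁ ∧ … ∧ p_k) → r` with all
`pᵢ` and `r` atoms. -/
inductive IsHorn : PropForm → Prop
  | atom (a : ℕ) : IsHorn (.var a)
  | imp {φ : PropForm} (r : ℕ) : AtomConj φ → IsHorn (φ.imp (.var r))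

/-! ## Modal formulas -/

/-- Modal propositional formulas. -/
inductive ModalForm : Type where
  | tr : ModalForm
  | fls : ModalForm
  | var : ℕ → ModalForm
  | and : ModalForm → ModalForm → ModalForm
  | or : ModalForm → ModalForm → ModalForm
  | imp : ModalForm → ModalForm → ModalForm
  | box : ModalForm → ModalForm
deriving DecidableEq

/-- Modal negation. -/
def ModalForm.neg (φ : ModalForm) : ModalForm := φ.imp .fls

/-- Substitution for modal formulas. -/
def ModalForm.subst (σ : ℕ → ModalForm) : ModalForm → ModalForm
  | .tr => .tr
  | .fls => .fls
  | .var a => σ a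
  | .and φ ψ => .and (φ.subst σ) (ψ.subst σ)
  | .or φ ψ => .or (φ.subst σ) (ψ.subst σ)
  | .imp φ ψ => .imp (φ.subst σ) (ψ.subst σ)
  | .box φ => .box (φ.subst σ)

/-- The forgetful translation (`□φ ↦ φ`). -/
def ModalForm.forget : ModalForm → PropForm
  | .tr => .tr
  | .fls => .fls
  | .var a => .var a
  | .and φ ψ => .and φ.forget ψ.forget
  | .or φ ψ => .or φ.forget ψ.forget
  | .imp φ ψ => .imp φ.forget ψ.forget
  | .box φ => φ.forget

/-- The collapse translation (`□φ ↦ ⊤`). -/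
def ModalForm.collapse : ModalForm → PropForm
  | .tr => .tr
  | .fls => .fls
  | .var a => .var a
  | .and φ ψ => .and φ.collapse ψ.collapse
  | .or φ ψ => .or φ.collapse ψ.collapse
  | .imp φ ψ => .imp φ.collapse ψ.collapse
  | .box _ => .tr

/-- Hilbert-style provability in the normal modal logic `K` extended by the
axioms in `Ax` (closed under substitution): a classical propositional base,
the distribution axiom, modus ponens, necessitation and substitution. -/
inductive KExt (Ax : Set ModalForm) : ModalForm → Prop
  | axiom' {φ : ModalForm} : φ ∈ Ax → KExt Ax φ
  | mp {φ ψ : ModalForm} : KExt Ax (φ.imp ψ) → KExt Ax φ → KExt Ax ψ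
  | nec {φ : ModalForm} : KExt Ax φ → KExt Ax φ.box
  | subst {φ : ModalForm} (σ : ℕ → ModalForm) : KExt Ax φ → KExt Ax (φ.subst σ)
  | ax1 (φ ψ : ModalForm) : KExt Ax (φ.imp (ψ.imp φ))
  | ax2 (φ ψ χ : ModalForm) : KExt Ax ((φ.imp (ψ.imp χ)).imp ((φ.imp ψ).imp (φ.imp χ)))
  | axAndI (φ ψ : ModalForm) : KExt Ax (φ.imp (ψ.imp (φ.and ψ)))
  | axAndL (φ ψ : ModalForm) : KExt Ax ((φ.and ψ).imp φ)
  | axAndR (φ ψ : ModalForm) : KExt Ax ((φ.and ψ).imp ψ)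
  | axOrL (φ ψ : ModalForm) : KExt Ax (φ.imp (φ.or ψ))
  | axOrR (φ ψ : ModalForm) : KExt Ax (ψ.imp (φ.or ψ))
  | axOrE (φ ψ χ : ModalForm) : KExt Ax ((φ.imp χ).imp ((ψ.imp χ).imp ((φ.or ψ).imp χ)))
  | axFls (φ : ModalForm) : KExt Ax (ModalForm.fls.imp φ)
  | axTr : KExt Ax .tr
  | axDNE (φ : ModalForm) : KExt Ax (φ.neg.neg.imp φ)
  | axK (φ ψ : ModalForm) : KExt Ax (((φ.imp ψ).box).imp (φ.box.imp ψ.box))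

/-- Provability in the basic modal logic `K`. -/
def KProof : ModalForm → Prop := KExt ∅

/-! ## Automatability -/

/-- A proof system for `CPC` is substitutable: substituting constants for some
of the variables transforms proofs with polynomial overhead. -/
def Substitutable (Pr : List Bool → List Bool → Prop) : Prop :=
  ∃ l : Polynomial ℕ, ∀ (φ : PropForm) (σ : ℕ → PropForm) (u : List Bool),
    (∀ a, σ a = .var a ∨ σ a = .tr ∨ σ a = .fls) →
    Pr u φ.encode →
    ∃ u', Pr u' (φ.subst σ).encode ∧ u'.length ≤ l.eval (u.length + φ.encode.length)

/-- Closure under variable-free modus ponens: from a proof of `φ → ψ` with `φ` a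
variable-free tautology one obtains a proof of `ψ` with polynomial overhead. -/
def ClosedUnderVarFreeMP (Pr : List Bool → List Bool → Prop) : Prop :=
  ∃ m : Polynomial ℕ, ∀ (φ ψ : PropForm) (u : List Bool),
    φ.vars = ∅ → φ.Taut → Pr u (φ.imp ψ).encode →
    ∃ u', Pr u' ψ.encode ∧ u'.length ≤ m.eval (u.length + (φ.imp ψ).encode.length)

/-- Automatability (padded formulation): a polynomial-time algorithm which, given a
formula `φ` together with (in unary) any bound `b` on the size of some `Pr`-proof of
`φ`, outputs a `Pr`-proof of `φ`; its running time is thus polynomial in `|φ|` and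
the size of the shortest proof of `φ`. -/
def Automatable (Pr : List Bool → List Bool → Prop) : Prop :=
  ∃ A : List Bool → List Bool, PolyTimeComputable A ∧
    ∀ (φ : PropForm) (b : ℕ),
      (∃ u, Pr u φ.encode ∧ u.length ≤ b) →
      Pr (A (pairEnc φ.encode (List.replicate b true))) φ.encode

/-! ## Frege systems -/

/-- An inference rule: finitely many premises and a conclusion. -/
structure FregeRule : Type where
  prems : List PropForm
  concl : PropForm

/-- `π` is a derivation from assumptions `Γ` in the inference system `F`: every
line is an assumption or follows from earlier lines by a substitution instance
of a rule of `F`. -/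
def IsDerivation (F : List FregeRule) (Γ : List PropForm) (π : List PropForm) : Prop :=
  ∀ (i : ℕ) (hi : i < π.length),
    π.get ⟨i, hi⟩ ∈ Γ ∨
    ∃ R ∈ F, ∃ σ : ℕ → PropForm,
      π.get ⟨i, hi⟩ = R.concl.subst σ ∧
      ∀ p ∈ R.prems, ∃ (j : ℕ) (hj : j < π.length), j < i ∧ π.get ⟨j, hj⟩ = p.subst σ

/-- `φ` is derivable from `Γ` in the inference system `F`. -/
def FregeProves (F : List FregeRule) (Γ : List PropForm) (φ : PropForm) : Prop :=
  ∃ π : List PropForm, IsDerivation F Γ π ∧ φ ∈ π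

/-- The size of a derivation: the total size of its formulas. -/
def derivSize (π : List PropForm) : ℕ := (π.map PropForm.size).sum

/-! ## Graphs encoded as binary strings -/

/-- Adjacency in the graph on `n` vertices encoded by a binary string of length
`n(n-1)/2` (the entry for the pair `{i, j}` with `i < j` is at position
`j(j-1)/2 + i`). -/
def adjOf (w : List Bool) (i j : ℕ) : Bool :=
  if i < j then w.getD (j * (j - 1) / 2 + i) false
  else if j < i then w.getD (i * (i - 1) / 2 + j) false
  else false

/-- The graph encoded by `w` (on `n` vertices) contains a `k`-clique. -/
def HasClique (w : List Bool) (n k : ℕ) : Prop :=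
  ∃ f : Fin k → Fin n, Function.Injective f ∧
    ∀ a b : Fin k, a ≠ b → adjOf w (f a) (f b) = true

/-- The graph encoded by `w` (on `n` vertices) has a proper `l`-coloring. -/
def HasColoring (w : List Bool) (n l : ℕ) : Prop :=
  ∃ c : Fin n → Fin l, ∀ i j : Fin n, adjOf w (i : ℕ) (j : ℕ) = true → c i ≠ c j

/-- The language of graphs (on `n ≥ n₀` vertices) containing a `K(n)`-clique. -/
def CliqueLang (n₀ : ℕ) (K : ℕ → ℕ) : Set (List Bool) :=
  {w | ∃ n, n₀ ≤ n ∧ w.length = n * (n - 1) / 2 ∧ HasClique w n (K n)}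

/-- The language of graphs (on `n ≥ n₀` vertices) that are `L(n)`-colorable. -/
def ColorLang (n₀ : ℕ) (L : ℕ → ℕ) : Set (List Bool) :=
  {w | ∃ n, n₀ ≤ n ∧ w.length = n * (n - 1) / 2 ∧ HasColoring w n (L n)}

/-! ## Substitutions used for the intuitionistic translations -/

/-- The substitution replacing `pᵢ` (`i < m`) by `¬pᵢ`. -/
def negSubst (m : ℕ) : ℕ → PropForm :=
  fun a => if a < m then (PropForm.var a).neg else PropForm.var a

/-- The substitution replacing `pᵢ` (`i < m`) by the fresh variable `q_i := p_{m+i}`. -/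
def shiftSubst (m : ℕ) : ℕ → PropForm :=
  fun a => if a < m then PropForm.var (m + a) else PropForm.var a

/-- `⋀_{i<m} (pᵢ ∨ qᵢ)` where `qᵢ := p_{m+i}`. -/
def pairDisjConj (m : ℕ) : PropForm :=
  conjList ((List.range m).map fun i => (PropForm.var i).or (PropForm.var (m + i)))

/-! ### Auxiliary development for Makinson's theorem -/

namespace Makinson

/-- Embedding of propositional formulas into modal formulas along an atom assignment. -/
def embedP (σ : ℕ → ModalForm) : PropForm → ModalForm
  | .tr => .tr
  | .fls => .fls
  | .var a => σ a
  | .and φ ψ => .and (embedP σ φ) (embedP σ ψ)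
  | .or φ ψ => .or (embedP σ φ) (embedP σ ψ)
  | .imp φ ψ => .imp (embedP σ φ) (embedP σ ψ)

lemma embedP_subst (σ : ℕ → ModalForm) (φ : PropForm) :
    (embedP ModalForm.var φ).subst σ = embedP σ φ := by
  induction φ <;> simp [embedP, ModalForm.subst, *]

variable {Ax : Set ModalForm}

lemma a1 {φ ψ : ModalForm} (h : KExt Ax φ) : KExt Ax (ψ.imp φ) := (KExt.ax1 φ ψ).mp h

lemma sC {φ ψ χ : ModalForm} (h1 : KExt Ax (φ.imp (ψ.imp χ))) (h2 : KExt Ax (φ.imp ψ)) :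
    KExt Ax (φ.imp χ) := ((KExt.ax2 φ ψ χ).mp h1).mp h2

lemma iC (φ : ModalForm) : KExt Ax (φ.imp φ) :=
  sC (KExt.ax1 φ (φ.imp φ)) (KExt.ax1 φ φ)

lemma liftImp {a X W : ModalForm} (h : KExt Ax (X.imp W)) :
    KExt Ax ((a.imp X).imp (a.imp W)) := (KExt.ax2 a X W).mp (a1 h)

lemma compI {P Q R : ModalForm} (h1 : KExt Ax (P.imp Q)) (h2 : KExt Ax (Q.imp R)) :
    KExt Ax (P.imp R) := sC (a1 h2) h1

/-- Iterated implication from a list of hypotheses. -/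
def impList (Γ : List ModalForm) (φ : ModalForm) : ModalForm := Γ.foldr .imp φ

lemma dThm {φ : ModalForm} (Γ : List ModalForm) (h : KExt Ax φ) : KExt Ax (impList Γ φ) := by
  induction Γ with
  | nil => exact h
  | cons a Γ ih => exact a1 ih

lemma dMpThm (Γ : List ModalForm) (φ ψ : ModalForm) :
    KExt Ax ((impList Γ (φ.imp ψ)).imp ((impList Γ φ).imp (impList Γ ψ))) := by
  induction Γ with
  | nil => exact iC _
  | cons a Γ ih => exact compI (liftImp ih) (KExt.ax2 a _ _)

lemma dMp {Γ : List ModalForm} {φ ψ : ModalForm} (h1 : KExt Ax (impList Γ (φ.imp ψ)))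
    (h2 : KExt Ax (impList Γ φ)) : KExt Ax (impList Γ ψ) :=
  ((dMpThm Γ φ ψ).mp h1).mp h2

lemma weakThm (Γ : List ModalForm) (φ : ModalForm) : KExt Ax (φ.imp (impList Γ φ)) := by
  induction Γ with
  | nil => exact iC φ
  | cons a Γ ih => exact compI ih (KExt.ax1 _ a)

lemma hypo {Γ : List ModalForm} {φ : ModalForm} (h : φ ∈ Γ) : KExt Ax (impList Γ φ) := by
  induction Γ with
  | nil => simp at h
  | cons a Γ ih =>
    rcases List.mem_cons.mp h with rfl | h
    · exact weakThm Γ φ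
    · exact a1 (ih h)

lemma lemThm (φ : ModalForm) : KExt Ax (φ.or φ.neg) := by
  have np : KExt Ax (impList [(φ.or φ.neg).neg, φ] .fls) :=
    dMp (φ := φ.or φ.neg) (hypo (by simp [ModalForm.neg]))
      (dMp (dThm _ (KExt.axOrL φ φ.neg)) (hypo (by simp)))
  have por : KExt Ax (impList [(φ.or φ.neg).neg] (φ.or φ.neg)) :=
    dMp (dThm _ (KExt.axOrR φ φ.neg)) np
  have bot : KExt Ax (impList [(φ.or φ.neg).neg] ModalForm.fls) :=
    dMp (φ := φ.or φ.neg) (hypo (by simp [ModalForm.neg])) por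
  exact (KExt.axDNE (φ.or φ.neg)).mp bot

lemma dCase {Γ : List ModalForm} {p ψ : ModalForm} (h1 : KExt Ax (impList Γ (p.imp ψ)))
    (h2 : KExt Ax (impList Γ (p.neg.imp ψ))) : KExt Ax (impList Γ ψ) :=
  dMp (dMp (dMp (dThm Γ (KExt.axOrE p p.neg ψ)) h1) h2) (dThm Γ (lemThm p))

lemma contraThm {A B : ModalForm} (h : KExt Ax (A.imp B)) : KExt Ax (B.neg.imp A.neg) :=
  dMp (Γ := [B.neg, A]) (φ := B) (hypo (by simp [ModalForm.neg]))
    (dMp (dThm _ h) (hypo (by simp)))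

/-- The list of literals determined by a valuation on the first `m` variables. -/
def litL (v : ℕ → Bool) (m : ℕ) : List ModalForm :=
  (List.range m).map fun i => if v i then ModalForm.var i else (ModalForm.var i).neg

/-- The signed version of a formula under a valuation. -/
def sgn (v : ℕ → Bool) (φ : PropForm) : ModalForm :=
  cond (φ.eval v) (embedP ModalForm.var φ) (embedP ModalForm.var φ).neg

lemma kal (Ax : Set ModalForm) (m : ℕ) (v : ℕ → Bool) :
    ∀ φ : PropForm, φ.vars ⊆ Finset.range m → KExt Ax (impList (litL v m) (sgn v φ)) := by
  intro φ
  induction φ with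
  | tr => intro _; exact dThm _ KExt.axTr
  | fls => intro _; exact dThm _ (iC .fls)
  | var a =>
    intro hv
    have ha : a < m := by
      have := hv (show a ∈ PropForm.vars (.var a) by simp [PropForm.vars])
      simpa using this
    have hmem : (if v a then ModalForm.var a else (ModalForm.var a).neg) ∈ litL v m :=
      List.mem_map.mpr ⟨a, List.mem_range.mpr ha, rfl⟩
    cases hva : v a with
    | true =>
      simp only [hva, if_true] at hmem
      simpa only [sgn, PropForm.eval, hva, cond_true, embedP] using hypo (Ax := Ax) hmem
    | false =>
      simp only [hva, if_false] at hmem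
      simpa only [sgn, PropForm.eval, hva, cond_false, embedP, Bool.false_eq_true, if_false] using hypo (Ax := Ax) hmem
  | and φ ψ ihφ ihψ =>
    intro hv
    rw [show (PropForm.and φ ψ).vars = φ.vars ∪ ψ.vars from rfl,
      Finset.union_subset_iff] at hv
    obtain ⟨h1, h2⟩ := hv
    cases hφ : φ.eval v with
    | false =>
      have Hφ := ihφ h1
      simp only [sgn, PropForm.eval, hφ, cond_false, Bool.false_and] at Hφ ⊢
      exact dMp (dThm _ (contraThm (KExt.axAndL (embedP .var φ) (embedP .var ψ)))) Hφ
    | true =>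
      cases hψ : ψ.eval v with
      | false =>
        have Hψ := ihψ h2
        simp only [sgn, PropForm.eval, hφ, hψ, cond_false, Bool.true_and] at Hψ ⊢
        exact dMp (dThm _ (contraThm (KExt.axAndR (embedP .var φ) (embedP .var ψ)))) Hψ
      | true =>
        have Hφ := ihφ h1; have Hψ := ihψ h2
        simp only [sgn, PropForm.eval, hφ, hψ, cond_true, Bool.true_and] at Hφ Hψ ⊢
        exact dMp (dMp (dThm _ (KExt.axAndI _ _)) Hφ) Hψ
  | or φ ψ ihφ ihψ =>
    intro hv
    rw [show (PropForm.or φ ψ).vars = φ.vars ∪ ψ.vars from rfl,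
      Finset.union_subset_iff] at hv
    obtain ⟨h1, h2⟩ := hv
    cases hφ : φ.eval v with
    | true =>
      have Hφ := ihφ h1
      simp only [sgn, PropForm.eval, hφ, cond_true, Bool.true_or] at Hφ ⊢
      exact dMp (dThm _ (KExt.axOrL (embedP .var φ) (embedP .var ψ))) Hφ
    | false =>
      cases hψ : ψ.eval v with
      | true =>
        have Hψ := ihψ h2
        simp only [sgn, PropForm.eval, hφ, hψ, cond_true, Bool.false_or] at Hψ ⊢
        exact dMp (dThm _ (KExt.axOrR (embedP .var φ) (embedP .var ψ))) Hψ
      | false =>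
        have Hφ := ihφ h1; have Hψ := ihψ h2
        simp only [sgn, PropForm.eval, hφ, hψ, cond_false, Bool.false_or] at Hφ Hψ ⊢
        exact dMp (dMp (dThm _ (KExt.axOrE (embedP .var φ) (embedP .var ψ) .fls)) Hφ) Hψ
  | imp φ ψ ihφ ihψ =>
    intro hv
    rw [show (PropForm.imp φ ψ).vars = φ.vars ∪ ψ.vars from rfl,
      Finset.union_subset_iff] at hv
    obtain ⟨h1, h2⟩ := hv
    cases hψ : ψ.eval v with
    | true =>
      have Hψ := ihψ h2
      simp only [sgn, PropForm.eval, hψ, cond_true, Bool.or_true] at Hψ ⊢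
      exact dMp (dThm _ (KExt.ax1 (embedP .var ψ) (embedP .var φ))) Hψ
    | false =>
      cases hφ : φ.eval v with
      | false =>
        have Hφ := ihφ h1
        simp only [sgn, PropForm.eval, hφ, hψ, cond_false, Bool.not_false, Bool.true_or,
          cond_true] at Hφ ⊢
        have t : KExt Ax ((embedP .var φ).neg.imp ((embedP .var φ).imp (embedP .var ψ))) :=
          dMp (Γ := [(embedP .var φ).neg, embedP .var φ])
            (dThm _ (KExt.axFls (embedP .var ψ)))
            (dMp (φ := embedP .var φ) (hypo (by simp [ModalForm.neg])) (hypo (by simp)))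
        exact dMp (dThm _ t) Hφ
      | true =>
        have Hφ := ihφ h1; have Hψ := ihψ h2
        simp only [sgn, PropForm.eval, hφ, hψ, cond_true, cond_false, Bool.not_true,
          Bool.false_or] at Hφ Hψ ⊢
        have t : KExt Ax ((embedP .var φ).imp ((embedP .var ψ).neg.imp
            (((embedP .var φ).imp (embedP .var ψ)).imp .fls))) :=
          dMp (Γ := [embedP .var φ, (embedP .var ψ).neg, (embedP .var φ).imp (embedP .var ψ)])
            (φ := embedP .var ψ) (hypo (by simp [ModalForm.neg]))
            (dMp (φ := embedP .var φ) (hypo (by simp)) (hypo (by simp)))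
        exact dMp (dMp (dThm _ t) Hφ) Hψ

lemma impList_append (Γ : List ModalForm) (l φ : ModalForm) :
    impList (Γ ++ [l]) φ = impList Γ (l.imp φ) := by
  simp [impList, List.foldr_append]

lemma elimVars (Ax : Set ModalForm) (ψ : ModalForm) :
    ∀ m : ℕ, (∀ v : ℕ → Bool, KExt Ax (impList (litL v m) ψ)) → KExt Ax ψ := by
  intro m
  induction m with
  | zero => intro H; simpa [litL, impList] using H (fun _ => false)
  | succ m ih =>
    intro H; apply ih; intro v
    have keyT : litL (fun i => if i = m then true else v i) (m + 1)
        = litL v m ++ [ModalForm.var m] := by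
      unfold litL
      rw [List.range_succ, List.map_append]
      congr 1
      · refine List.map_congr_left (fun i hi => ?_)
        have : i ≠ m := Nat.ne_of_lt (List.mem_range.mp hi)
        simp [this]
      · simp
    have keyF : litL (fun i => if i = m then false else v i) (m + 1)
        = litL v m ++ [(ModalForm.var m).neg] := by
      unfold litL
      rw [List.range_succ, List.map_append]
      congr 1
      · refine List.map_congr_left (fun i hi => ?_)
        have : i ≠ m := Nat.ne_of_lt (List.mem_range.mp hi)
        simp [this]
      · simp
    have hT := H (fun i => if i = m then true else v i)
    have hF := H (fun i => if i = m then false else v i)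
    rw [keyT, impList_append] at hT
    rw [keyF, impList_append] at hF
    exact dCase hT hF

/-- Completeness of the classical part of `KExt` for tautologies. -/
lemma complete (Ax : Set ModalForm) (φ : PropForm) (h : φ.Taut) :
    KExt Ax (embedP ModalForm.var φ) := by
  apply elimVars Ax _ (φ.vars.sup id + 1)
  intro v
  have hsub : φ.vars ⊆ Finset.range (φ.vars.sup id + 1) := fun a ha =>
    Finset.mem_range.mpr (Nat.lt_succ_of_le (Finset.le_sup (f := id) ha))
  have hk := kal Ax (φ.vars.sup id + 1) v φ hsub
  simpa only [sgn, h v, cond_true] using hk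

/-- Any substitution instance of a tautology is provable in any `KExt`. -/
lemma tautInst (Ax : Set ModalForm) (σ : ℕ → ModalForm) (φ : PropForm) (h : φ.Taut) :
    KExt Ax (embedP σ φ) := by
  have := (complete Ax φ h).subst σ
  rwa [embedP_subst] at this

/-! ### Derived modal facts via tautology instances -/

/-- Modal biconditional. -/
def miff (a b : ModalForm) : ModalForm := (a.imp b).and (b.imp a)

/-- Propositional biconditional. -/
def piff (a b : PropForm) : PropForm := (a.imp b).and (b.imp a)

abbrev pv (n : ℕ) : PropForm := .var n

lemma boxMono {φ ψ : ModalForm} (h : KExt Ax (φ.imp ψ)) : KExt Ax (φ.box.imp ψ.box) :=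
  (KExt.axK φ ψ).mp h.nec

lemma hypIffSelf (X Y : ModalForm) : KExt Ax (X.imp (miff Y Y)) :=
  tautInst Ax (fun n => [X, Y].getD n .tr) ((pv 0).imp (piff (pv 1) (pv 1)))
    (by intro v; cases h0 : v 0 <;> cases h1 : v 1 <;> simp [PropForm.eval, piff, h0, h1])

lemma monoAndH {X a a' b b' : ModalForm} (h1 : KExt Ax (X.imp (miff a a')))
    (h2 : KExt Ax (X.imp (miff b b'))) : KExt Ax (X.imp (miff (a.and b) (a'.and b'))) := by
  refine ((tautInst Ax (fun n => [X, a, a', b, b'].getD n .tr)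
    (((pv 0).imp (piff (pv 1) (pv 2))).imp (((pv 0).imp (piff (pv 3) (pv 4))).imp
      ((pv 0).imp (piff ((pv 1).and (pv 3)) ((pv 2).and (pv 4)))))) ?_).mp h1).mp h2
  intro v
  cases h0 : v 0 <;> cases h1 : v 1 <;> cases h2 : v 2 <;> cases h3 : v 3 <;> cases h4 : v 4 <;>
    simp [PropForm.eval, piff, h0, h1, h2, h3, h4]

lemma monoOrH {X a a' b b' : ModalForm} (h1 : KExt Ax (X.imp (miff a a')))
    (h2 : KExt Ax (X.imp (miff b b'))) : KExt Ax (X.imp (miff (a.or b) (a'.or b'))) := by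
  refine ((tautInst Ax (fun n => [X, a, a', b, b'].getD n .tr)
    (((pv 0).imp (piff (pv 1) (pv 2))).imp (((pv 0).imp (piff (pv 3) (pv 4))).imp
      ((pv 0).imp (piff ((pv 1).or (pv 3)) ((pv 2).or (pv 4)))))) ?_).mp h1).mp h2
  intro v
  cases h0 : v 0 <;> cases h1 : v 1 <;> cases h2 : v 2 <;> cases h3 : v 3 <;> cases h4 : v 4 <;>
    simp [PropForm.eval, piff, h0, h1, h2, h3, h4]

lemma monoImpH {X a a' b b' : ModalForm} (h1 : KExt Ax (X.imp (miff a a')))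
    (h2 : KExt Ax (X.imp (miff b b'))) : KExt Ax (X.imp (miff (a.imp b) (a'.imp b'))) := by
  refine ((tautInst Ax (fun n => [X, a, a', b, b'].getD n .tr)
    (((pv 0).imp (piff (pv 1) (pv 2))).imp (((pv 0).imp (piff (pv 3) (pv 4))).imp
      ((pv 0).imp (piff ((pv 1).imp (pv 3)) ((pv 2).imp (pv 4)))))) ?_).mp h1).mp h2
  intro v
  cases h0 : v 0 <;> cases h1 : v 1 <;> cases h2 : v 2 <;> cases h3 : v 3 <;> cases h4 : v 4 <;>
    simp [PropForm.eval, piff, h0, h1, h2, h3, h4]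

lemma impIffTr {x y : ModalForm} (h : KExt Ax (x.imp y)) : KExt Ax (x.imp (miff y .tr)) := by
  refine (tautInst Ax (fun n => [x, y].getD n .tr)
    (((pv 0).imp (pv 1)).imp ((pv 0).imp (piff (pv 1) .tr))) ?_).mp h
  intro v; cases h0 : v 0 <;> cases h1 : v 1 <;> simp [PropForm.eval, piff, h0, h1]

lemma iffTrans {x y z : ModalForm} (h1 : KExt Ax (miff x y)) (h2 : KExt Ax (miff y z)) :
    KExt Ax (miff x z) := by
  refine ((tautInst Ax (fun n => [x, y, z].getD n .tr)
    ((piff (pv 0) (pv 1)).imp ((piff (pv 1) (pv 2)).imp (piff (pv 0) (pv 2)))) ?_).mp h1).mp h2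
  intro v
  cases h0 : v 0 <;> cases h1 : v 1 <;> cases h2 : v 2 <;>
    simp [PropForm.eval, piff, h0, h1, h2]

lemma iffMPR {y z : ModalForm} (h1 : KExt Ax (miff y z)) (h2 : KExt Ax z) : KExt Ax y := by
  refine ((tautInst Ax (fun n => [y, z].getD n .tr)
    ((piff (pv 0) (pv 1)).imp ((pv 1).imp (pv 0))) ?_).mp h1).mp h2
  intro v; cases h0 : v 0 <;> cases h1 : v 1 <;> simp [PropForm.eval, piff, h0, h1]

lemma selfIffTr {y : ModalForm} (h : KExt Ax y) : KExt Ax (miff y .tr) := by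
  refine (tautInst Ax (fun n => [y].getD n .tr)
    ((pv 0).imp (piff (pv 0) .tr)) ?_).mp h
  intro v; cases h0 : v 0 <;> simp [PropForm.eval, piff, h0]

/-- under hypothesis `x`, `y ↔ z` together with a proof of `z` gives `x → y`. -/
lemma hypIffElimPos {x y z : ModalForm} (h1 : KExt Ax (x.imp (miff y z))) (h2 : KExt Ax z) :
    KExt Ax (x.imp y) := by
  refine ((tautInst Ax (fun n => [x, y, z].getD n .tr)
    (((pv 0).imp (piff (pv 1) (pv 2))).imp ((pv 2).imp ((pv 0).imp (pv 1)))) ?_).mp h1).mp h2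
  intro v
  cases h0 : v 0 <;> cases h1 : v 1 <;> cases h2 : v 2 <;>
    simp [PropForm.eval, piff, h0, h1, h2]

lemma hypIffElimNeg {x y z : ModalForm} (h1 : KExt Ax (x.imp (miff y z)))
    (h2 : KExt Ax z.neg) : KExt Ax (x.imp y.neg) := by
  refine ((tautInst Ax (fun n => [x, y, z].getD n .tr)
    (((pv 0).imp (piff (pv 1) (pv 2))).imp (((pv 2).imp .fls).imp
      ((pv 0).imp ((pv 1).imp .fls)))) ?_).mp h1).mp h2
  intro v
  cases h0 : v 0 <;> cases h1 : v 1 <;> cases h2 : v 2 <;>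
    simp [PropForm.eval, piff, h0, h1, h2]

lemma finIffPos {x w z : ModalForm} (hz : KExt Ax z) (hf : KExt Ax (x.imp w)) :
    KExt Ax (x.imp (miff w z)) := by
  refine ((tautInst Ax (fun n => [x, w, z].getD n .tr)
    ((pv 2).imp (((pv 0).imp (pv 1)).imp ((pv 0).imp (piff (pv 1) (pv 2))))) ?_).mp hz).mp hf
  intro v
  cases h0 : v 0 <;> cases h1 : v 1 <;> cases h2 : v 2 <;>
    simp [PropForm.eval, piff, h0, h1, h2]

lemma finIffNeg {x u vv w z : ModalForm} (h1 : KExt Ax (x.imp u))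
    (h2 : KExt Ax (u.imp (vv.imp w))) (h3 : KExt Ax (x.imp w.neg))
    (h4 : KExt Ax z.neg) : KExt Ax (x.imp (miff vv z)) := by
  refine ((((tautInst Ax (fun n => [x, u, vv, w, z].getD n .tr)
    (((pv 0).imp (pv 1)).imp (((pv 1).imp ((pv 2).imp (pv 3))).imp
      (((pv 0).imp ((pv 3).imp .fls)).imp (((pv 4).imp .fls).imp
        ((pv 0).imp (piff (pv 2) (pv 4))))))) ?_).mp h1).mp h2).mp h3).mp h4
  intro v
  cases h0 : v 0 <;> cases h1 : v 1 <;> cases h2 : v 2 <;> cases h3 : v 3 <;> cases h4 : v 4 <;>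
    simp [PropForm.eval, piff, h0, h1, h2, h3, h4]

lemma dStep {b t c : ModalForm} (h1 : KExt Ax (b.imp (miff t c))) (h2 : KExt Ax c.neg) :
    KExt Ax (t.imp b.neg) := by
  refine ((tautInst Ax (fun n => [b, t, c].getD n .tr)
    (((pv 0).imp (piff (pv 1) (pv 2))).imp (((pv 2).imp .fls).imp
      ((pv 1).imp ((pv 0).imp .fls)))) ?_).mp h1).mp h2
  intro v
  cases h0 : v 0 <;> cases h1 : v 1 <;> cases h2 : v 2 <;>
    simp [PropForm.eval, piff, h0, h1, h2]

/-! ### Substitution and closedness lemmas -/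

lemma eval_subst (φ : PropForm) (τ : ℕ → PropForm) (v : ℕ → Bool) :
    (φ.subst τ).eval v = φ.eval (fun a => (τ a).eval v) := by
  induction φ <;> simp [PropForm.subst, PropForm.eval, *]

lemma taut_subst {φ : PropForm} (τ : ℕ → PropForm) (h : φ.Taut) : (φ.subst τ).Taut := by
  intro v; rw [eval_subst]; exact h _

lemma forget_subst (φ : ModalForm) (σ : ℕ → ModalForm) :
    (φ.subst σ).forget = φ.forget.subst (fun a => (σ a).forget) := by
  induction φ <;> simp [ModalForm.subst, ModalForm.forget, PropForm.subst, *]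

lemma collapse_subst (φ : ModalForm) (σ : ℕ → ModalForm) :
    (φ.subst σ).collapse = φ.collapse.subst (fun a => (σ a).collapse) := by
  induction φ <;> simp [ModalForm.subst, ModalForm.collapse, PropForm.subst, *]

/-- Variable-free modal formulas. -/
def MClosed : ModalForm → Prop
  | .tr => True
  | .fls => True
  | .var _ => False
  | .and a b => MClosed a ∧ MClosed b
  | .or a b => MClosed a ∧ MClosed b
  | .imp a b => MClosed a ∧ MClosed b
  | .box a => MClosed a

/-- Modal depth. -/
def mdepth : ModalForm → ℕ
  | .tr => 0
  | .fls => 0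
  | .var _ => 0
  | .and a b => max (mdepth a) (mdepth b)
  | .or a b => max (mdepth a) (mdepth b)
  | .imp a b => max (mdepth a) (mdepth b)
  | .box a => mdepth a + 1

lemma mclosed_subst_const (σ : ℕ → ModalForm) (h : ∀ a, σ a = .tr ∨ σ a = .fls)
    (φ : ModalForm) : MClosed (φ.subst σ) := by
  induction φ with
  | var a => rcases h a with ha | ha <;> simp [ModalForm.subst, ha, MClosed]
  | _ => simp_all [ModalForm.subst, MClosed]

lemma forget_vars_of_closed {θ : ModalForm} (h : MClosed θ) : θ.forget.vars = ∅ := by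
  induction θ <;> simp_all [MClosed, ModalForm.forget, PropForm.vars]

lemma eval_of_vars_empty {φ : PropForm} (h : φ.vars = ∅) (v w : ℕ → Bool) :
    φ.eval v = φ.eval w := by
  induction φ with
  | var a => simp [PropForm.vars] at h
  | tr => rfl
  | fls => rfl
  | and φ ψ ihφ ihψ =>
    rw [show PropForm.vars (φ.and ψ) = φ.vars ∪ ψ.vars from rfl, Finset.union_eq_empty] at h
    simp [PropForm.eval, ihφ h.1, ihψ h.2]
  | or φ ψ ihφ ihψ =>
    rw [show PropForm.vars (φ.or ψ) = φ.vars ∪ ψ.vars from rfl, Finset.union_eq_empty] at h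
    simp [PropForm.eval, ihφ h.1, ihψ h.2]
  | imp φ ψ ihφ ihψ =>
    rw [show PropForm.vars (φ.imp ψ) = φ.vars ∪ ψ.vars from rfl, Finset.union_eq_empty] at h
    simp [PropForm.eval, ihφ h.1, ihψ h.2]

/-- The formula `E_d` expressing iterated seriality. -/
def EForm : ℕ → ModalForm
  | 0 => .tr
  | e + 1 => ((ModalForm.fls.box).neg).and (EForm e).box

/-- Under `□⊥`, every formula is equivalent to its collapse translation. -/
lemma collapseLem (Ax : Set ModalForm) :
    ∀ θ : ModalForm, KExt Ax ((ModalForm.fls.box).imp (miff θ (embedP .var θ.collapse)))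
  | .tr => hypIffSelf _ _
  | .fls => hypIffSelf _ _
  | .var a => hypIffSelf _ _
  | .and a b => monoAndH (collapseLem Ax a) (collapseLem Ax b)
  | .or a b => monoOrH (collapseLem Ax a) (collapseLem Ax b)
  | .imp a b => monoImpH (collapseLem Ax a) (collapseLem Ax b)
  | .box a => impIffTr (boxMono (KExt.axFls a))

/-- Under `E_d`, every closed formula of depth at most `d` is equivalent to its
forgetful translation. -/
lemma forgetLem (Ax : Set ModalForm) :
    ∀ θ : ModalForm, MClosed θ → ∀ d : ℕ, mdepth θ ≤ d →
      KExt Ax ((EForm d).imp (miff θ (embedP .var θ.forget))) := by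
  intro θ
  induction θ with
  | tr => intro _ d _; exact hypIffSelf _ _
  | fls => intro _ d _; exact hypIffSelf _ _
  | var a => intro h; exact absurd h (by simp [MClosed])
  | and a b iha ihb =>
    intro hcl d hd
    have hda : mdepth a ≤ d := le_trans (le_max_left _ (mdepth b)) hd
    have hdb : mdepth b ≤ d := le_trans (le_max_right (mdepth a) _) hd
    exact monoAndH (iha hcl.1 d hda) (ihb hcl.2 d hdb)
  | or a b iha ihb =>
    intro hcl d hd
    have hda : mdepth a ≤ d := le_trans (le_max_left _ (mdepth b)) hd
    have hdb : mdepth b ≤ d := le_trans (le_max_right (mdepth a) _) hd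
    exact monoOrH (iha hcl.1 d hda) (ihb hcl.2 d hdb)
  | imp a b iha ihb =>
    intro hcl d hd
    have hda : mdepth a ≤ d := le_trans (le_max_left _ (mdepth b)) hd
    have hdb : mdepth b ≤ d := le_trans (le_max_right (mdepth a) _) hd
    exact monoImpH (iha hcl.1 d hda) (ihb hcl.2 d hdb)
  | box a iha =>
    intro hcl d hd
    have hd1 : mdepth a + 1 ≤ d := hd
    obtain ⟨e, rfl⟩ : ∃ e, d = e + 1 := ⟨d - 1, by omega⟩
    have hd' : mdepth a ≤ e := by omega
    have h0 := iha (show MClosed a from hcl) e hd'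
    have hE1 : KExt Ax ((EForm (e + 1)).imp (EForm e).box) := KExt.axAndR _ _
    have hEA : KExt Ax ((EForm (e + 1)).imp (ModalForm.fls.box).neg) := KExt.axAndL _ _
    by_cases hb : a.forget.eval (fun _ => false) = true
    · have hT : a.forget.Taut := fun v =>
        (eval_of_vars_empty (forget_vars_of_closed (show MClosed a from hcl)) v _).trans hb
      have hc : KExt Ax (embedP ModalForm.var a.forget) := complete Ax a.forget hT
      have hfin : KExt Ax ((EForm (e + 1)).imp a.box) :=
        compI hE1 (boxMono (hypIffElimPos h0 hc))
      exact finIffPos hc hfin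
    · have hT : a.forget.neg.Taut := by
        intro v
        have hf : a.forget.eval v = false := by
          rw [eval_of_vars_empty (forget_vars_of_closed (show MClosed a from hcl)) v (fun _ => false)]
          cases h' : a.forget.eval (fun _ => false)
          · rfl
          · exact absurd h' hb
        simp [PropForm.neg, PropForm.eval, hf]
      have hcn : KExt Ax (embedP ModalForm.var a.forget).neg := complete Ax a.forget.neg hT
      have hbox : KExt Ax ((EForm (e + 1)).imp (a.neg).box) :=
        compI hE1 (boxMono (hypIffElimNeg h0 hcn))
      exact finIffNeg hbox (KExt.axK a .fls) hEA hcn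

/-! ### The logics `Triv` and `Ver` -/

/-- The `Triv` axiom `□p ↔ p`. -/
def trivAx : ModalForm :=
  (((ModalForm.var 0).box.imp (ModalForm.var 0)).and
    ((ModalForm.var 0).imp (ModalForm.var 0).box))

/-- The `Ver` axiom `□p`. -/
def verAx : ModalForm := (ModalForm.var 0).box

lemma trivBox (ψ : ModalForm) : KExt {trivAx} (miff (ModalForm.box ψ) ψ) :=
  (KExt.axiom' (show trivAx ∈ ({trivAx} : Set ModalForm) from rfl)).subst (fun _ => ψ)

lemma verBox (ψ : ModalForm) : KExt {verAx} ψ.box :=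
  (KExt.axiom' (show verAx ∈ ({verAx} : Set ModalForm) from rfl)).subst (fun _ => ψ)

lemma miffRefl (Y : ModalForm) {Ax : Set ModalForm} : KExt Ax (miff Y Y) :=
  (hypIffSelf .tr Y).mp KExt.axTr

lemma trivIff : ∀ χ : ModalForm, KExt {trivAx} (miff χ (embedP ModalForm.var χ.forget))
  | .tr => miffRefl _
  | .fls => miffRefl _
  | .var a => miffRefl _
  | .and a b => (monoAndH (a1 (ψ := .tr) (trivIff a)) (a1 (ψ := .tr) (trivIff b))).mp KExt.axTr
  | .or a b => (monoOrH (a1 (ψ := .tr) (trivIff a)) (a1 (ψ := .tr) (trivIff b))).mp KExt.axTr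
  | .imp a b => (monoImpH (a1 (ψ := .tr) (trivIff a)) (a1 (ψ := .tr) (trivIff b))).mp KExt.axTr
  | .box a => iffTrans (trivBox a) (trivIff a)

lemma verIff : ∀ χ : ModalForm, KExt {verAx} (miff χ (embedP ModalForm.var χ.collapse))
  | .tr => miffRefl _
  | .fls => miffRefl _
  | .var a => miffRefl _
  | .and a b => (monoAndH (a1 (ψ := .tr) (verIff a)) (a1 (ψ := .tr) (verIff b))).mp KExt.axTr
  | .or a b => (monoOrH (a1 (ψ := .tr) (verIff a)) (a1 (ψ := .tr) (verIff b))).mp KExt.axTr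
  | .imp a b => (monoImpH (a1 (ψ := .tr) (verIff a)) (a1 (ψ := .tr) (verIff b))).mp KExt.axTr
  | .box a => selfIffTr (verBox a)

lemma trivOf (χ : ModalForm) (h : χ.forget.Taut) : KExt {trivAx} χ :=
  iffMPR (trivIff χ) (complete _ χ.forget h)

lemma verOf (χ : ModalForm) (h : χ.collapse.Taut) : KExt {verAx} χ :=
  iffMPR (verIff χ) (complete _ χ.collapse h)

/-! ### Soundness of `Triv` under `forget` and of `Ver` under `collapse` -/

lemma trivSound {χ : ModalForm} (h : KExt {trivAx} χ) : χ.forget.Taut := by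
  induction h with
  | @axiom' φ hmem =>
    rw [Set.mem_singleton_iff] at hmem; subst hmem
    intro v
    simp only [trivAx, ModalForm.forget, PropForm.eval]
    cases h0 : PropForm.eval v (PropForm.var 0) <;> simp [h0]
  | mp h1 h2 ih1 ih2 =>
    intro v
    have a1 := ih1 v; have a2 := ih2 v
    simp only [ModalForm.forget, PropForm.eval] at a1
    rw [a2] at a1; simpa using a1
  | nec h ih => exact ih
  | subst σ h ih => rw [forget_subst]; exact taut_subst _ ih
  | ax1 φ ψ =>
    intro v; simp only [ModalForm.forget, PropForm.eval]
    cases h1 : PropForm.eval v φ.forget <;> cases h2 : PropForm.eval v ψ.forget <;> simp [h1, h2]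
  | ax2 φ ψ χ =>
    intro v; simp only [ModalForm.forget, PropForm.eval]
    cases h1 : PropForm.eval v φ.forget <;> cases h2 : PropForm.eval v ψ.forget <;>
      cases h3 : PropForm.eval v χ.forget <;> simp [h1, h2, h3]
  | axAndI φ ψ =>
    intro v; simp only [ModalForm.forget, PropForm.eval]
    cases h1 : PropForm.eval v φ.forget <;> cases h2 : PropForm.eval v ψ.forget <;> simp [h1, h2]
  | axAndL φ ψ =>
    intro v; simp only [ModalForm.forget, PropForm.eval]
    cases h1 : PropForm.eval v φ.forget <;> cases h2 : PropForm.eval v ψ.forget <;> simp [h1, h2]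
  | axAndR φ ψ =>
    intro v; simp only [ModalForm.forget, PropForm.eval]
    cases h1 : PropForm.eval v φ.forget <;> cases h2 : PropForm.eval v ψ.forget <;> simp [h1, h2]
  | axOrL φ ψ =>
    intro v; simp only [ModalForm.forget, PropForm.eval]
    cases h1 : PropForm.eval v φ.forget <;> cases h2 : PropForm.eval v ψ.forget <;> simp [h1, h2]
  | axOrR φ ψ =>
    intro v; simp only [ModalForm.forget, PropForm.eval]
    cases h1 : PropForm.eval v φ.forget <;> cases h2 : PropForm.eval v ψ.forget <;> simp [h1, h2]
  | axOrE φ ψ χ =>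
    intro v; simp only [ModalForm.forget, PropForm.eval]
    cases h1 : PropForm.eval v φ.forget <;> cases h2 : PropForm.eval v ψ.forget <;>
      cases h3 : PropForm.eval v χ.forget <;> simp [h1, h2, h3]
  | axFls φ =>
    intro v; simp [ModalForm.forget, PropForm.eval]
  | axTr => intro v; rfl
  | axDNE φ =>
    intro v; simp only [ModalForm.neg, ModalForm.forget, PropForm.eval]
    cases h1 : PropForm.eval v φ.forget <;> simp [h1]
  | axK φ ψ =>
    intro v; simp only [ModalForm.forget, PropForm.eval]
    cases h1 : PropForm.eval v φ.forget <;> cases h2 : PropForm.eval v ψ.forget <;> simp [h1, h2]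

lemma verSound {χ : ModalForm} (h : KExt {verAx} χ) : χ.collapse.Taut := by
  induction h with
  | @axiom' φ hmem =>
    rw [Set.mem_singleton_iff] at hmem; subst hmem
    intro v; rfl
  | mp h1 h2 ih1 ih2 =>
    intro v
    have a1 := ih1 v; have a2 := ih2 v
    simp only [ModalForm.collapse, PropForm.eval] at a1
    rw [a2] at a1; simpa using a1
  | nec h ih => intro v; rfl
  | subst σ h ih => rw [collapse_subst]; exact taut_subst _ ih
  | ax1 φ ψ =>
    intro v; simp only [ModalForm.collapse, PropForm.eval]
    cases h1 : PropForm.eval v φ.collapse <;> cases h2 : PropForm.eval v ψ.collapse <;>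
      simp [h1, h2]
  | ax2 φ ψ χ =>
    intro v; simp only [ModalForm.collapse, PropForm.eval]
    cases h1 : PropForm.eval v φ.collapse <;> cases h2 : PropForm.eval v ψ.collapse <;>
      cases h3 : PropForm.eval v χ.collapse <;> simp [h1, h2, h3]
  | axAndI φ ψ =>
    intro v; simp only [ModalForm.collapse, PropForm.eval]
    cases h1 : PropForm.eval v φ.collapse <;> cases h2 : PropForm.eval v ψ.collapse <;>
      simp [h1, h2]
  | axAndL φ ψ =>
    intro v; simp only [ModalForm.collapse, PropForm.eval]
    cases h1 : PropForm.eval v φ.collapse <;> cases h2 : PropForm.eval v ψ.collapse <;>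
      simp [h1, h2]
  | axAndR φ ψ =>
    intro v; simp only [ModalForm.collapse, PropForm.eval]
    cases h1 : PropForm.eval v φ.collapse <;> cases h2 : PropForm.eval v ψ.collapse <;>
      simp [h1, h2]
  | axOrL φ ψ =>
    intro v; simp only [ModalForm.collapse, PropForm.eval]
    cases h1 : PropForm.eval v φ.collapse <;> cases h2 : PropForm.eval v ψ.collapse <;>
      simp [h1, h2]
  | axOrR φ ψ =>
    intro v; simp only [ModalForm.collapse, PropForm.eval]
    cases h1 : PropForm.eval v φ.collapse <;> cases h2 : PropForm.eval v ψ.collapse <;>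
      simp [h1, h2]
  | axOrE φ ψ χ =>
    intro v; simp only [ModalForm.collapse, PropForm.eval]
    cases h1 : PropForm.eval v φ.collapse <;> cases h2 : PropForm.eval v ψ.collapse <;>
      cases h3 : PropForm.eval v χ.collapse <;> simp [h1, h2, h3]
  | axFls φ =>
    intro v; simp [ModalForm.collapse, PropForm.eval]
  | axTr => intro v; rfl
  | axDNE φ =>
    intro v; simp only [ModalForm.neg, ModalForm.collapse, PropForm.eval]
    cases h1 : PropForm.eval v φ.collapse <;> simp [h1]
  | axK φ ψ =>
    intro v; rfl

end Makinson
/-- Makinson's theorem: every consistent normal modal logic is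
contained in `K + {□p ↔ p}` or in `K + {□p}`; consequently either the forgetful
translation of every member of `L` is a classical tautology, or the collapse
translation of every member of `L` is a classical tautology. -/
theorem makinson (L : Set ModalForm)
    (hK : ∀ φ, KProof φ → φ ∈ L)
    (hsubst : ∀ (φ : ModalForm) (σ : ℕ → ModalForm), φ ∈ L → φ.subst σ ∈ L)
    (hmp : ∀ φ ψ : ModalForm, φ.imp ψ ∈ L → φ ∈ L → ψ ∈ L)
    (hnec : ∀ φ : ModalForm, φ ∈ L → φ.box ∈ L)
    (hcons : ModalForm.fls ∉ L) :
    ((∀ χ ∈ L, KExt {(((ModalForm.var 0).box.imp (ModalForm.var 0)).and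
        ((ModalForm.var 0).imp (ModalForm.var 0).box))} χ) ∨
      (∀ χ ∈ L, KExt {(ModalForm.var 0).box} χ)) ∧
    ((∀ χ ∈ L, χ.forget.Taut) ∨ (∀ χ ∈ L, χ.collapse.Taut)) := by
  have dich : (∀ χ ∈ L, χ.forget.Taut) ∨ (∀ χ ∈ L, χ.collapse.Taut) := by
    by_cases hf : ∀ χ ∈ L, χ.forget.Taut
    · exact Or.inl hf
    · right
      push_neg at hf
      obtain ⟨χ₁, h1L, h1⟩ := hf
      have hex1 : ∃ v, χ₁.forget.eval v = false := by
        by_contra hcc; push_neg at hcc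
        exact h1 (fun u => by
          cases h' : χ₁.forget.eval u
          · exact absurd h' (hcc u)
          · rfl)
      obtain ⟨v, hv⟩ := hex1
      intro χ₂ h2L
      by_contra h2
      have hex2 : ∃ u, χ₂.collapse.eval u = false := by
        by_contra hcc; push_neg at hcc
        exact h2 (fun u => by
          cases h' : χ₂.collapse.eval u
          · exact absurd h' (hcc u)
          · rfl)
      obtain ⟨w, hw⟩ := hex2
      -- the closed instance of `χ₂` refutes `□⊥`
      set σw : ℕ → ModalForm := fun a => if w a then .tr else .fls with hσw
      have hθ₂L : χ₂.subst σw ∈ L := hsubst _ _ h2L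
      have hcoll : ∀ u, ((χ₂.subst σw).collapse).eval u = false := by
        intro u
        rw [Makinson.collapse_subst, Makinson.eval_subst]
        have he : (fun a => ((σw a).collapse).eval u) = w := by
          funext a
          by_cases hwa : w a <;> simp [hσw, hwa, ModalForm.collapse, PropForm.eval]
        rw [he]; exact hw
      have hTn : ((χ₂.subst σw).collapse.neg).Taut := by
        intro u; simp [PropForm.neg, PropForm.eval, hcoll u]
      have hcn : KExt (∅ : Set ModalForm)
          (Makinson.embedP ModalForm.var ((χ₂.subst σw).collapse)).neg :=
        Makinson.complete ∅ ((χ₂.subst σw).collapse.neg) hTn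
      have hKA : KExt (∅ : Set ModalForm) ((χ₂.subst σw).imp (ModalForm.fls.box).neg) :=
        Makinson.dStep (Makinson.collapseLem ∅ (χ₂.subst σw)) hcn
      have hAL : (ModalForm.fls.box).neg ∈ L := hmp _ _ (hK _ hKA) hθ₂L
      -- all the seriality formulas are in `L`
      have hEL : ∀ d, Makinson.EForm d ∈ L := by
        intro d
        induction d with
        | zero => exact hK _ KExt.axTr
        | succ e ih =>
          exact hmp _ _ (hmp _ _ (hK _ (KExt.axAndI _ _)) hAL) (hnec _ ih)
      -- the closed instance of `χ₁` now gives a contradiction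
      set σv : ℕ → ModalForm := fun a => if v a then .tr else .fls with hσv
      have hθ₁L : χ₁.subst σv ∈ L := hsubst _ _ h1L
      have hθ₁cl : Makinson.MClosed (χ₁.subst σv) :=
        Makinson.mclosed_subst_const _
          (fun a => by by_cases hva : v a <;> simp [hσv, hva]) _
      have hforg : ∀ u, ((χ₁.subst σv).forget).eval u = false := by
        intro u
        rw [Makinson.forget_subst, Makinson.eval_subst]
        have he : (fun a => ((σv a).forget).eval u) = v := by
          funext a
          by_cases hva : v a <;> simp [hσv, hva, ModalForm.forget, PropForm.eval]
        rw [he]; exact hv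
      have hTn1 : ((χ₁.subst σv).forget.neg).Taut := by
        intro u; simp [PropForm.neg, PropForm.eval, hforg u]
      have hcn1 : KExt (∅ : Set ModalForm)
          (Makinson.embedP ModalForm.var ((χ₁.subst σv).forget)).neg :=
        Makinson.complete ∅ ((χ₁.subst σv).forget.neg) hTn1
      have hF := Makinson.forgetLem ∅ (χ₁.subst σv) hθ₁cl
        (Makinson.mdepth (χ₁.subst σv)) le_rfl
      have hEimp : KExt (∅ : Set ModalForm)
          ((Makinson.EForm (Makinson.mdepth (χ₁.subst σv))).imp (χ₁.subst σv).neg) :=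
        Makinson.hypIffElimNeg hF hcn1
      have hnegL : (χ₁.subst σv).neg ∈ L := hmp _ _ (hK _ hEimp) (hEL _)
      exact hcons (hmp (χ₁.subst σv) .fls hnegL hθ₁L)
  refine ⟨?_, dich⟩
  rcases dich with hf | hc
  · exact Or.inl (fun χ hχ => Makinson.trivOf χ (hf χ hχ))
  · exact Or.inr (fun χ hχ => Makinson.verOf χ (hc χ hχ))
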